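/- Let O be a discrete valuation ring with uniformizer ϖ and fraction field F, let n ≥ 1, and let X ∈ Mₙ(O) be a matrix with X − Y ∈ ϖ·Mₙ(O). Let t_X = {A ∈ Mₙ(F) : XA = AX} be the centralizer of X. Then for v ∈ Mₙ(F), one has Tr(X·(vw − wv)) ∈ O for every w ∈ ϖ·Mₙ(O) if and only if v ∈ ϖ⁻¹·Mₙ(O) + t_X. -/

import Mathlib

open Matrix

/-- The regular nilpotent matrix `Y` with `(i, i+1)`-entries equal to `1` and all
other entries `0`. -/
def Ymat (n : ℕ) (R : Type*) [CommRing R] : Matrix (Fin n) (Fin n) R :=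
  fun i j => if (j : ℕ) = (i : ℕ) + 1 then 1 else 0


lemma Ymat_pow {n : ℕ} {R : Type*} [CommRing R] (m : ℕ) (i j : Fin n) :
    (Ymat n R ^ m) i j = if (j : ℕ) = (i : ℕ) + m then 1 else 0 := by
  induction m generalizing i j with
  | zero =>
    simp [pow_zero, Matrix.one_apply, Fin.ext_iff, eq_comm]
  | succ m ih =>
    rw [pow_succ, Matrix.mul_apply]
    by_cases h : (j : ℕ) = (i : ℕ) + (m + 1)
    · have hlt : (i : ℕ) + m < n := by omega
      rw [if_pos h, Finset.sum_eq_single (⟨(i : ℕ) + m, hlt⟩ : Fin n)]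
      · rw [ih]; simp [Ymat]; omega
      · intro k _ hk
        have : (k : ℕ) ≠ (i : ℕ) + m := fun hh => hk (Fin.ext hh)
        rw [ih, if_neg this, zero_mul]
      · simp
    · rw [if_neg h, Finset.sum_eq_zero]
      intro k _
      rw [ih]
      by_cases hk : (k : ℕ) = (i : ℕ) + m
      · have : (j : ℕ) ≠ (k : ℕ) + 1 := by omega
        simp [Ymat, this]
      · rw [if_neg hk, zero_mul]


lemma lemA {O : Type*} [CommRing O] {ϖ : O} {n : ℕ}
    {X : Matrix (Fin n) (Fin n) O}
    (hX : ∀ i j : Fin n, ϖ ∣ (X - Ymat n O) i j)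
    (A : Matrix (Fin n) (Fin n) O)
    (hA : ∀ i j : Fin n, ϖ ∣ (X * A - A * X) i j) :
    ∃ c : Fin n → O, ∀ i j : Fin n,
      ϖ ∣ (A - ∑ m : Fin n, c m • X ^ (m : ℕ)) i j := by
  have hY : ∀ i j : Fin n, ϖ ∣ (Ymat n O * A - A * Ymat n O) i j := by
    intro i j
    have heq : Ymat n O * A - A * Ymat n O
        = (X * A - A * X) - ((X - Ymat n O) * A - A * (X - Ymat n O)) := by
      noncomm_ring
    rw [heq, Matrix.sub_apply, Matrix.sub_apply]
    refine dvd_sub (hA i j) (dvd_sub ?_ ?_)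
    · rw [Matrix.mul_apply]
      exact Finset.dvd_sum fun k _ => (hX i k).mul_right _
    · rw [Matrix.mul_apply]
      exact Finset.dvd_sum fun k _ => (hX k j).mul_left _
  have l1 : ∀ (p : Fin n) (j : ℕ) (hj : j + 1 < n),
      (A * Ymat n O) p ⟨j + 1, hj⟩ = A p ⟨j, Nat.lt_of_succ_lt hj⟩ := by
    intro p j hj
    rw [Matrix.mul_apply, Finset.sum_eq_single (⟨j, Nat.lt_of_succ_lt hj⟩ : Fin n)]
    · simp [Ymat]
    · intro k _ hk
      have hne : ¬ ((j : ℕ) + 1 = (k : ℕ) + 1) := by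
        intro hh; exact hk (Fin.ext (show (k : ℕ) = j by omega))
      simp [Ymat, hne]
      intro hh; exact absurd (by omega : j + 1 = (k : ℕ) + 1) hne
    · simp
  have l2 : ∀ (p : Fin n) (h0 : 0 < n), (A * Ymat n O) p ⟨0, h0⟩ = 0 := by
    intro p h0
    rw [Matrix.mul_apply]
    refine Finset.sum_eq_zero fun k _ => ?_
    simp [Ymat]
  have l3 : ∀ (i : ℕ) (hi : i + 1 < n) (q : Fin n),
      (Ymat n O * A) ⟨i, Nat.lt_of_succ_lt hi⟩ q = A ⟨i + 1, hi⟩ q := by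
    intro i hi q
    rw [Matrix.mul_apply, Finset.sum_eq_single (⟨i + 1, hi⟩ : Fin n)]
    · simp [Ymat]
    · intro k _ hk
      have hne : ¬ ((k : ℕ) = i + 1) := fun hh => hk (Fin.ext hh)
      simp [Ymat, hne]
    · simp
  have key : ∀ (i : ℕ) (hi : i < n) (j : ℕ) (hj : j < n),
      ϖ ∣ A ⟨i, hi⟩ ⟨j, hj⟩ -
        (if i ≤ j then A ⟨0, Nat.lt_of_le_of_lt (Nat.zero_le i) hi⟩
          ⟨j - i, Nat.lt_of_le_of_lt (Nat.sub_le j i) hj⟩ else 0) := by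
    intro i
    induction i with
    | zero => intro hi j hj; simp
    | succ i ih =>
      intro hi j hj
      match j with
      | 0 =>
        rw [if_neg (by omega), sub_zero]
        have h := hY ⟨i, Nat.lt_of_succ_lt hi⟩ ⟨0, by omega⟩
        rw [Matrix.sub_apply, l3 i hi, l2 _ (by omega), sub_zero] at h
        exact h
      | j + 1 =>
        have h1 := hY ⟨i, Nat.lt_of_succ_lt hi⟩ ⟨j + 1, hj⟩
        rw [Matrix.sub_apply, l3 i hi, l1 _ j hj] at h1
        have h2 := ih (Nat.lt_of_succ_lt hi) j (Nat.lt_of_succ_lt hj)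
        have h5 := dvd_add h1 h2
        rw [sub_add_sub_cancel] at h5
        simp only [Nat.add_sub_add_right, Nat.add_le_add_iff_right]
        exact h5
  have hpow : ∀ (m : ℕ) (i j : Fin n), ϖ ∣ (X ^ m - Ymat n O ^ m) i j := by
    intro m
    induction m with
    | zero => simp
    | succ m ih =>
      intro i j
      have heq : X ^ (m + 1) - Ymat n O ^ (m + 1)
          = X ^ m * (X - Ymat n O) + (X ^ m - Ymat n O ^ m) * Ymat n O := by
        rw [pow_succ, pow_succ]; noncomm_ring
      rw [heq, Matrix.add_apply]
      refine dvd_add ?_ ?_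
      · rw [Matrix.mul_apply]
        exact Finset.dvd_sum fun k _ => (hX k j).mul_left _
      · rw [Matrix.mul_apply]
        exact Finset.dvd_sum fun k _ => (ih i k).mul_right _
  refine ⟨fun m => A ⟨0, Nat.lt_of_le_of_lt (Nat.zero_le _) m.isLt⟩ m, fun i j => ?_⟩
  set c : Fin n → O := fun m => A ⟨0, Nat.lt_of_le_of_lt (Nat.zero_le _) m.isLt⟩ m with hc
  have hYsum : (∑ m : Fin n, c m • Ymat n O ^ (m : ℕ)) i j
      = if (i : ℕ) ≤ (j : ℕ) then
          A ⟨0, Nat.lt_of_le_of_lt (Nat.zero_le _) i.isLt⟩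
            ⟨(j : ℕ) - (i : ℕ), Nat.lt_of_le_of_lt (Nat.sub_le _ _) j.isLt⟩ else 0 := by
    rw [Matrix.sum_apply]
    by_cases h : (i : ℕ) ≤ (j : ℕ)
    · rw [if_pos h, Finset.sum_eq_single
        (⟨(j : ℕ) - (i : ℕ), Nat.lt_of_le_of_lt (Nat.sub_le _ _) j.isLt⟩ : Fin n)]
      · rw [Matrix.smul_apply, Ymat_pow, if_pos (by simp; omega), smul_eq_mul, mul_one]
      · intro k _ hk
        have hne : ¬ ((j : ℕ) = (i : ℕ) + (k : ℕ)) := by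
          intro hh; exact hk (Fin.ext (by simp; omega))
        rw [Matrix.smul_apply, Ymat_pow, if_neg hne, smul_eq_mul, mul_zero]
      · simp
    · rw [if_neg h, Finset.sum_eq_zero]
      intro k _
      rw [Matrix.smul_apply, Ymat_pow, if_neg (by omega), smul_eq_mul, mul_zero]
  have hsplit : (∑ m : Fin n, c m • X ^ (m : ℕ)) i j
      = (∑ m : Fin n, c m • Ymat n O ^ (m : ℕ)) i j
        + ∑ m : Fin n, c m * ((X ^ (m : ℕ) - Ymat n O ^ (m : ℕ)) i j) := by
    rw [Matrix.sum_apply, Matrix.sum_apply, ← Finset.sum_add_distrib]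
    refine Finset.sum_congr rfl fun m _ => ?_
    simp only [Matrix.smul_apply, Matrix.sub_apply, smul_eq_mul]
    ring
  rw [Matrix.sub_apply, hsplit]
  have : A i j - ((∑ m : Fin n, c m • Ymat n O ^ (m : ℕ)) i j
      + ∑ m : Fin n, c m * ((X ^ (m : ℕ) - Ymat n O ^ (m : ℕ)) i j))
      = (A i j - (∑ m : Fin n, c m • Ymat n O ^ (m : ℕ)) i j)
        - ∑ m : Fin n, c m * ((X ^ (m : ℕ) - Ymat n O ^ (m : ℕ)) i j) := by ring
  rw [this, hYsum]
  refine dvd_sub ?_ (Finset.dvd_sum fun m _ => (hpow (m : ℕ) i j).mul_left _)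
  exact key (i : ℕ) i.isLt (j : ℕ) j.isLt


lemma lemB {O : Type*} [CommRing O] [IsDomain O] {ϖ : O} (hϖ0 : ϖ ≠ 0) {n : ℕ}
    {X : Matrix (Fin n) (Fin n) O}
    (hX : ∀ i j : Fin n, ϖ ∣ (X - Ymat n O) i j) :
    ∀ (j : ℕ) (w : Matrix (Fin n) (Fin n) O),
      (∀ p q : Fin n, ϖ ^ j ∣ (X * w - w * X) p q) →
      ∃ w' t : Matrix (Fin n) (Fin n) O, X * t = t * X ∧ w = ϖ ^ j • w' + t := by
  intro j
  induction j with
  | zero =>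
    intro w _
    exact ⟨w, 0, by simp, by simp⟩
  | succ j ih =>
    intro w hw
    obtain ⟨w'', t, ht, hwe⟩ := ih w fun p q =>
      dvd_trans (pow_dvd_pow ϖ (Nat.le_succ j)) (hw p q)
    -- X*w - w*X = ϖ^j • (X*w'' - w''*X)
    have hcomm : X * w - w * X = ϖ ^ j • (X * w'' - w'' * X) := by
      rw [hwe, mul_add, add_mul, Matrix.mul_smul, Matrix.smul_mul, ht, smul_sub]
      abel
    have hdvd1 : ∀ p q : Fin n, ϖ ∣ (X * w'' - w'' * X) p q := by
      intro p q
      have h := hw p q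
      rw [hcomm, Matrix.smul_apply, smul_eq_mul, pow_succ] at h
      obtain ⟨d, hd⟩ := h
      refine ⟨d, mul_left_cancel₀ (pow_ne_zero j hϖ0) ?_⟩
      rw [hd]; ring
    obtain ⟨c, hc⟩ := lemA hX w'' hdvd1
    set P : Matrix (Fin n) (Fin n) O := ∑ m : Fin n, c m • X ^ (m : ℕ) with hP
    have hXP : X * P = P * X := by
      rw [hP, Finset.mul_sum, Finset.sum_mul]
      refine Finset.sum_congr rfl fun m _ => ?_
      rw [Matrix.mul_smul, Matrix.smul_mul, ← pow_succ', ← pow_succ]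
    set W' : Matrix (Fin n) (Fin n) O := Matrix.of fun p q => Classical.choose (hc p q) with hW'
    have hw'' : w'' = ϖ • W' + P := by
      ext p q
      have h : w'' p q - P p q = ϖ * Classical.choose (hc p q) :=
        Classical.choose_spec (hc p q)
      rw [Matrix.add_apply, Matrix.smul_apply, smul_eq_mul]
      show w'' p q = ϖ * Classical.choose (hc p q) + P p q
      linear_combination h
    refine ⟨W', ϖ ^ j • P + t, ?_, ?_⟩
    · rw [mul_add, add_mul, Matrix.mul_smul, Matrix.smul_mul, ht, hXP]
    · rw [hwe, hw'', smul_add, smul_smul, ← pow_succ, add_assoc]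


section helpers
variable {O F : Type*} [CommRing O] [IsDomain O] [IsDiscreteValuationRing O]
  [Field F] [Algebra O F] [IsFractionRing O F]

lemma denom1 (ϖ : O) (hϖ : Irreducible ϖ) (x : F) :
    ∃ (k : ℕ) (a : O), x * (algebraMap O F ϖ) ^ k = algebraMap O F a := by
  obtain ⟨⟨a, b⟩, hab⟩ := IsLocalization.surj (nonZeroDivisors O) x
  have hb0 : (b : O) ≠ 0 := nonZeroDivisors.coe_ne_zero b
  obtain ⟨k, u, hu⟩ := IsDiscreteValuationRing.eq_unit_mul_pow_irreducible hb0 hϖ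
  refine ⟨k, a * ((u⁻¹ : Oˣ) : O), ?_⟩
  have key : x * (algebraMap O F ϖ) ^ k * algebraMap O F (u : O) = algebraMap O F a := by
    rw [← hab]
    show _ = x * algebraMap O F (b : O)
    rw [hu, _root_.map_mul, map_pow]
    ring
  have huu : algebraMap O F (u : O) * algebraMap O F ((u⁻¹ : Oˣ) : O) = 1 := by
    rw [← _root_.map_mul, ← Units.val_mul]; simp
  calc x * (algebraMap O F ϖ) ^ k
      = x * (algebraMap O F ϖ) ^ k * (algebraMap O F (u : O) * algebraMap O F ((u⁻¹ : Oˣ) : O)) := by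
        rw [huu, mul_one]
    _ = (x * (algebraMap O F ϖ) ^ k * algebraMap O F (u : O)) * algebraMap O F ((u⁻¹ : Oˣ) : O) := by
        ring
    _ = algebraMap O F a * algebraMap O F ((u⁻¹ : Oˣ) : O) := by rw [key]
    _ = algebraMap O F (a * ((u⁻¹ : Oˣ) : O)) := (_root_.map_mul _ _ _).symm

lemma denomMat (ϖ : O) (hϖ : Irreducible ϖ) {n : ℕ} (v : Matrix (Fin n) (Fin n) F) :
    ∃ K : ℕ, 1 ≤ K ∧ ∃ W : Matrix (Fin n) (Fin n) O,
      ∀ i j : Fin n, v i j * (algebraMap O F ϖ) ^ K = algebraMap O F (W i j) := by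
  have h := fun i j : Fin n => denom1 ϖ hϖ (v i j)
  choose k a ha using h
  refine ⟨1 + ∑ i : Fin n, ∑ j : Fin n, k i j, le_add_right le_rfl, ?_⟩
  refine ⟨Matrix.of fun i j => a i j * ϖ ^ (1 + (∑ i : Fin n, ∑ j : Fin n, k i j) - k i j), fun i j => ?_⟩
  have hle : k i j ≤ ∑ i : Fin n, ∑ j : Fin n, k i j := by
    calc k i j ≤ ∑ j' : Fin n, k i j' := Finset.single_le_sum (fun _ _ => Nat.zero_le _) (Finset.mem_univ j)
      _ ≤ ∑ i' : Fin n, ∑ j' : Fin n, k i' j' := Finset.single_le_sum (f := fun i' => ∑ j' : Fin n, k i' j') (fun _ _ => Nat.zero_le _) (Finset.mem_univ i)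
  have hsplit : 1 + ∑ i : Fin n, ∑ j : Fin n, k i j = k i j + (1 + (∑ i : Fin n, ∑ j : Fin n, k i j) - k i j) := by
    omega
  simp only [Matrix.of_apply]
  rw [hsplit, pow_add, ← mul_assoc, ha, _root_.map_mul, map_pow]
  congr 2
  omega
end helpers


lemma trace_cyc {R : Type*} [CommRing R] {n : ℕ} (A B C : Matrix (Fin n) (Fin n) R) :
    (A * (B * C - C * B)).trace = ((A * B - B * A) * C).trace := by
  rw [mul_sub, sub_mul, trace_sub, trace_sub]
  congr 1
  · rw [← mul_assoc]
  · rw [← mul_assoc, trace_mul_comm, ← mul_assoc]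

lemma trace_mul_single {R : Type*} [CommRing R] {n : ℕ} (B : Matrix (Fin n) (Fin n) R)
    (p q : Fin n) (c : R) :
    (B * Matrix.of (fun r s => if r = p ∧ s = q then c else 0)).trace = B q p * c := by
  simp [Matrix.trace, Matrix.diag, Matrix.mul_apply, ite_and, Finset.sum_ite_eq, mul_ite]

lemma trace_map' {O F : Type*} [CommRing O] [CommRing F] (φ : O →+* F) {n : ℕ}
    (M : Matrix (Fin n) (Fin n) O) : (M.map φ).trace = φ M.trace := by
  simp [Matrix.trace, Matrix.diag, map_sum, Matrix.map_apply]

lemma map_smul' {O F : Type*} [CommRing O] [CommRing F] (φ : O →+* F) {n : ℕ}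
    (a : O) (M : Matrix (Fin n) (Fin n) O) : (a • M).map φ = φ a • M.map φ := by
  ext i j
  simp [Matrix.map_apply, Matrix.smul_apply, smul_eq_mul]

lemma map_commutator {O F : Type*} [CommRing O] [CommRing F] (φ : O →+* F) {n : ℕ}
    (A B : Matrix (Fin n) (Fin n) O) :
    (A * B - B * A).map φ = A.map φ * B.map φ - B.map φ * A.map φ := by
  simp only [← RingHom.mapMatrix_apply, map_sub, _root_.map_mul]


/-- Let `O` be a discrete valuation ring with uniformizer `ϖ` and
fraction field `F`, let `X ∈ Mₙ(O)` with `X - Y ∈ ϖ·Mₙ(O)`, and let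
`t_X = {A ∈ Mₙ(F) : XA = AX}` be the centralizer of `X`. Then for `v ∈ Mₙ(F)`:
`Tr(X·(vw - wv)) ∈ O` for all `w ∈ ϖ·Mₙ(O)` if and only if
`v ∈ ϖ⁻¹·Mₙ(O) + t_X`. -/
theorem stmt13 {O : Type*} [CommRing O] [IsDomain O] [IsDiscreteValuationRing O]
    {F : Type*} [Field F] [Algebra O F] [IsFractionRing O F]
    (ϖ : O) (hϖ : Irreducible ϖ)
    (n : ℕ) (hn : 1 ≤ n) (X : Matrix (Fin n) (Fin n) O)
    (hX : ∀ i j : Fin n, ϖ ∣ (X - Ymat n O) i j)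
    (v : Matrix (Fin n) (Fin n) F) :
    (∀ w : Matrix (Fin n) (Fin n) F,
        (∀ i j : Fin n, ∃ c : O, w i j = algebraMap O F (ϖ * c)) →
        ∃ c : O,
          (X.map (algebraMap O F) * (v * w - w * v)).trace = algebraMap O F c) ↔
      ∃ u t : Matrix (Fin n) (Fin n) F,
        (∀ i j : Fin n, ∃ c : O, u i j = (algebraMap O F ϖ)⁻¹ * algebraMap O F c) ∧
        X.map (algebraMap O F) * t = t * X.map (algebraMap O F) ∧
        v = u + t := by
  set φ : O →+* F := algebraMap O F with hφ
  have hinj : Function.Injective φ := IsFractionRing.injective O F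
  have hϖ0 : ϖ ≠ 0 := hϖ.ne_zero
  have hϖ'0 : φ ϖ ≠ 0 := fun h => hϖ0 (hinj (by rw [h, map_zero]))
  constructor
  · -- forward direction
    intro H
    obtain ⟨K, hK1, W, hW⟩ := denomMat ϖ hϖ v
    have hv : v = ((φ ϖ) ^ K)⁻¹ • (W.map φ) := by
      ext i j
      rw [Matrix.smul_apply, Matrix.map_apply, smul_eq_mul, inv_mul_eq_div,
        eq_div_iff (pow_ne_zero _ hϖ'0)]
      exact hW i j
    have hBW : X.map φ * v - v * X.map φ = ((φ ϖ) ^ K)⁻¹ • ((X * W - W * X).map φ) := by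
      rw [hv, Matrix.mul_smul, Matrix.smul_mul, ← smul_sub, map_commutator]
    have hCd : ∀ p q : Fin n, ϖ ^ (K - 1) ∣ (X * W - W * X) p q := by
      intro p q
      set w : Matrix (Fin n) (Fin n) F :=
        Matrix.of (fun r s => if r = q ∧ s = p then φ ϖ else 0) with hwdef
      have hw : ∀ i j : Fin n, ∃ c : O, w i j = φ (ϖ * c) := by
        intro i j
        by_cases h : i = q ∧ j = p
        · exact ⟨1, by simp [hwdef, h]⟩
        · exact ⟨0, by simp [hwdef, h]⟩
      obtain ⟨c, hc⟩ := H w hw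
      rw [trace_cyc, hwdef, _root_.trace_mul_single, hBW, Matrix.smul_apply, smul_eq_mul,
        Matrix.map_apply] at hc
      -- hc : (φϖ^K)⁻¹ * φ ((X*W - W*X) p q) * φ ϖ = φ c
      have hc2 : φ (ϖ * ((X * W - W * X) p q)) = φ (c * ϖ ^ K) := by
        rw [_root_.map_mul, _root_.map_mul, map_pow, Matrix.sub_apply, map_sub,
          mul_comm (φ ϖ)]
        field_simp at hc
        rw [← map_sub, ← Matrix.sub_apply, hc, mul_comm]
      have hc3 : ϖ * ((X * W - W * X) p q) = c * ϖ ^ K := hinj hc2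
      refine ⟨c, mul_left_cancel₀ hϖ0 ?_⟩
      have hKe : ϖ ^ K = ϖ * ϖ ^ (K - 1) := by
        rw [← pow_succ']
        congr 1
        omega
      rw [hc3, hKe]
      ring
    obtain ⟨W', t, ht, hWe⟩ := lemB hϖ0 hX (K - 1) W hCd
    refine ⟨(φ ϖ)⁻¹ • (W'.map φ), ((φ ϖ) ^ K)⁻¹ • (t.map φ), ?_, ?_, ?_⟩
    · intro i j
      exact ⟨W' i j, by rw [Matrix.smul_apply, Matrix.map_apply, smul_eq_mul]⟩
    · rw [Matrix.mul_smul, Matrix.smul_mul]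
      congr 1
      rw [← Matrix.map_mul, ← Matrix.map_mul, ht]
    · rw [hv, hWe]
      have hmap : ((ϖ ^ (K - 1) • W' + t).map φ)
          = (φ ϖ) ^ (K - 1) • W'.map φ + t.map φ := by
        ext i j
        simp [Matrix.map_apply, Matrix.add_apply, Matrix.smul_apply, smul_eq_mul,
          map_add, _root_.map_mul, map_pow]
      rw [hmap, smul_add, smul_smul]
      congr 2
      have hKe : K = (K - 1) + 1 := by omega
      rw [hKe, pow_succ, mul_inv]
      field_simp
      rw [Nat.add_sub_cancel]
  · -- backward direction
    rintro ⟨u, t, hu, ht, rfl⟩ w hw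
    choose U hU using hu
    choose Wc hWc using hw
    have hu' : u = (φ ϖ)⁻¹ • ((Matrix.of U).map φ) := by
      ext i j
      rw [Matrix.smul_apply, Matrix.map_apply, Matrix.of_apply, smul_eq_mul]
      exact hU i j
    have hw' : w = (φ ϖ) • ((Matrix.of Wc).map φ) := by
      ext i j
      rw [Matrix.smul_apply, Matrix.map_apply, Matrix.of_apply, smul_eq_mul]
      rw [hWc i j, _root_.map_mul]
    have hsplit : (u + t) * w - w * (u + t) = (u * w - w * u) + (t * w - w * t) := by
      noncomm_ring
    rw [hsplit, mul_add, trace_add]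
    have htzero : (X.map φ * (t * w - w * t)).trace = 0 := by
      rw [trace_cyc, ht, sub_self, Matrix.zero_mul, trace_zero]
    rw [htzero, add_zero, trace_cyc]
    have hcommu : X.map φ * u - u * X.map φ
        = (φ ϖ)⁻¹ • ((X * Matrix.of U - Matrix.of U * X).map φ) := by
      rw [hu', Matrix.mul_smul, Matrix.smul_mul, ← smul_sub, map_commutator]
    rw [hcommu, hw', Matrix.smul_mul, Matrix.mul_smul, smul_smul, inv_mul_cancel₀ hϖ'0,
      one_smul]
    refine ⟨((X * Matrix.of U - Matrix.of U * X) * Matrix.of Wc).trace, ?_⟩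
    rw [← trace_map' φ, Matrix.map_mul]
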